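/- Let L be the 2-dimensional space of real symmetric 3×3 matrices of the form [[y₁, y₂, 0], [y₂, y₁, y₂], [0, y₂, y₁]] with y₁, y₂ ∈ ℝ. Then the ideal of all polynomials in ℂ[x₁₁,x₁₂,x₁₃,x₂₂,x₂₃,x₃₃] vanishing at exp(A) for every A ∈ L equals the ideal generated by the three linear forms x₂₂ − x₁₃ − x₃₃, x₁₂ − x₂₃, x₁₁ − x₃₃ and the quadric −2x₁₃x₃₃ + x₂₃², and this ideal is prime. -/

import Mathlib

open Matrix MvPolynomial

/-- The point `(X₁₁, X₁₂, X₁₃, X₂₂, X₂₃, X₃₃) ∈ ℂ⁶` of upper-triangular entries of the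
matrix exponential of a real `3 × 3` matrix `A`. -/
noncomputable def gibbsPoint3 (A : Matrix (Fin 3) (Fin 3) ℝ) : Fin 6 → ℂ :=
  ![((NormedSpace.exp A) 0 0 : ℂ), ((NormedSpace.exp A) 0 1 : ℂ),
    ((NormedSpace.exp A) 0 2 : ℂ), ((NormedSpace.exp A) 1 1 : ℂ),
    ((NormedSpace.exp A) 1 2 : ℂ), ((NormedSpace.exp A) 2 2 : ℂ)]

/-- The vanishing ideal `I(exp(L))` in `ℂ[x₁₁,x₁₂,x₁₃,x₂₂,x₂₃,x₃₃]` of the exponential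
image of a set `L` of real `3 × 3` matrices. -/
noncomputable def vanishingIdeal3 (L : Set (Matrix (Fin 3) (Fin 3) ℝ)) :
    Ideal (MvPolynomial (Fin 6) ℂ) where
  carrier := {q | ∀ A ∈ L, MvPolynomial.eval (gibbsPoint3 A) q = 0}
  add_mem' := by
    intro a b ha hb A hA
    simp [map_add, ha A hA, hb A hA]
  zero_mem' := by intro A hA; simp
  smul_mem' := by
    intro c q hq A hA
    simp [smul_eq_mul, _root_.map_mul, hq A hA]

/-- The variable `x₁₁`. -/
noncomputable abbrev x11 : MvPolynomial (Fin 6) ℂ := MvPolynomial.X 0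
/-- The variable `x₁₂`. -/
noncomputable abbrev x12 : MvPolynomial (Fin 6) ℂ := MvPolynomial.X 1
/-- The variable `x₁₃`. -/
noncomputable abbrev x13 : MvPolynomial (Fin 6) ℂ := MvPolynomial.X 2
/-- The variable `x₂₂`. -/
noncomputable abbrev x22 : MvPolynomial (Fin 6) ℂ := MvPolynomial.X 3
/-- The variable `x₂₃`. -/
noncomputable abbrev x23 : MvPolynomial (Fin 6) ℂ := MvPolynomial.X 4
/-- The variable `x₃₃`. -/
noncomputable abbrev x33 : MvPolynomial (Fin 6) ℂ := MvPolynomial.X 5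
namespace AuxPath8

noncomputable def Pm : Matrix (Fin 3) (Fin 3) ℝ :=
  !![1/2, Real.sqrt 2/2, 1/2; Real.sqrt 2/2, 0, -(Real.sqrt 2/2); 1/2, -(Real.sqrt 2/2), 1/2]

lemma h2 : Real.sqrt 2 * Real.sqrt 2 = 2 := Real.mul_self_sqrt (by norm_num)
lemma h2sq : Real.sqrt 2 ^ 2 = 2 := Real.sq_sqrt (by norm_num)
lemma h2C : ((Real.sqrt 2 : ℝ) : ℂ)^2 = 2 := by
  rw [← Complex.ofReal_pow, h2sq]; norm_num

lemma PP : Pm * Pm = 1 := by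
  have h2 := h2
  ext i j
  fin_cases i <;> fin_cases j <;>
    simp [Pm, Matrix.mul_apply, Fin.sum_univ_three, Matrix.one_apply] <;>
    nlinarith [h2]

lemma diag3 (v : Fin 3 → ℝ) :
    Matrix.diagonal v = !![v 0, 0, 0; 0, v 1, 0; 0, 0, v 2] := by
  ext i j
  fin_cases i <;> fin_cases j <;> simp [Matrix.diagonal, Matrix.vecHead, Matrix.vecTail]

lemma expA (y₁ y₂ : ℝ) :
    NormedSpace.exp !![y₁, y₂, 0; y₂, y₁, y₂; 0, y₂, y₁] =
      (fun α β γ : ℝ =>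
      !![(α + 2*β + γ)/4, Real.sqrt 2 * (α - γ)/4, (α - 2*β + γ)/4;
         Real.sqrt 2 * (α - γ)/4, (α + γ)/2, Real.sqrt 2 * (α - γ)/4;
         (α - 2*β + γ)/4, Real.sqrt 2 * (α - γ)/4, (α + 2*β + γ)/4])
      (Real.exp (y₁ + Real.sqrt 2 * y₂)) (Real.exp y₁) (Real.exp (y₁ - Real.sqrt 2 * y₂)) := by
  have hPinv : Pm⁻¹ = Pm := Matrix.inv_eq_right_inv PP
  have hA : !![y₁, y₂, 0; y₂, y₁, y₂; 0, y₂, y₁] =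
      Pm * Matrix.diagonal ![y₁ + Real.sqrt 2 * y₂, y₁, y₁ - Real.sqrt 2 * y₂] * Pm⁻¹ := by
    rw [hPinv, diag3]
    ext i j
    fin_cases i <;> fin_cases j <;>
      simp [Pm, Matrix.mul_apply, Fin.sum_univ_three] <;>
      (try ring_nf) <;> (try simp only [h2sq]) <;> (try ring_nf)
  have hU : IsUnit Pm := ⟨⟨Pm, Pm, PP, PP⟩, rfl⟩
  rw [hA, Matrix.exp_conj Pm _ hU, Matrix.exp_diagonal, hPinv]
  have hexp : (NormedSpace.exp ![y₁ + Real.sqrt 2 * y₂, y₁, y₁ - Real.sqrt 2 * y₂] : Fin 3 → ℝ)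
      = ![Real.exp (y₁ + Real.sqrt 2 * y₂), Real.exp y₁, Real.exp (y₁ - Real.sqrt 2 * y₂)] := by
    rw [Pi.exp_def]
    funext i; fin_cases i <;> simp [Real.exp_eq_exp_ℝ]
  rw [hexp, diag3]
  ext i j
  fin_cases i <;> fin_cases j <;>
    simp [Pm, Matrix.mul_apply, Fin.sum_univ_three] <;>
    (try ring_nf) <;> (try simp only [h2sq]) <;> (try ring_nf)

lemma gibbs_eq (y₁ y₂ : ℝ) :
    gibbsPoint3 !![y₁, y₂, 0; y₂, y₁, y₂; 0, y₂, y₁] =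
      (fun s t : ℝ => ![((s:ℂ))^2, ((Real.sqrt 2:ℝ):ℂ)*(s:ℂ)*(t:ℂ), ((t:ℂ))^2,
         ((s:ℂ))^2+((t:ℂ))^2, ((Real.sqrt 2:ℝ):ℂ)*(s:ℂ)*(t:ℂ), ((s:ℂ))^2])
      ((Real.exp ((y₁ + Real.sqrt 2*y₂)/2) + Real.exp ((y₁ - Real.sqrt 2*y₂)/2))/2)
      ((Real.exp ((y₁ + Real.sqrt 2*y₂)/2) - Real.exp ((y₁ - Real.sqrt 2*y₂)/2))/2) := by
  set a := Real.exp ((y₁ + Real.sqrt 2*y₂)/2) with ha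
  set b := Real.exp ((y₁ - Real.sqrt 2*y₂)/2) with hb
  have hα : Real.exp (y₁ + Real.sqrt 2 * y₂) = a * a := by
    rw [ha, ← Real.exp_add]; ring_nf
  have hβ : Real.exp y₁ = a * b := by
    rw [ha, hb, ← Real.exp_add]; ring_nf
  have hγ : Real.exp (y₁ - Real.sqrt 2 * y₂) = b * b := by
    rw [hb, ← Real.exp_add]; ring_nf
  funext i
  fin_cases i <;>
    simp only [gibbsPoint3, expA, hα, hβ, hγ] <;>
    simp [Matrix.cons_val_zero, Matrix.cons_val_one, Matrix.vecHead, Matrix.vecTail] <;>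
    push_cast <;> ring

lemma param (x y : ℝ) (h1 : 0 < y + x) (h2' : 0 < y - x) :
    ∃ y₁ y₂ : ℝ, gibbsPoint3 !![y₁, y₂, 0; y₂, y₁, y₂; 0, y₂, y₁] =
      ![((y:ℂ))^2, ((Real.sqrt 2:ℝ):ℂ)*(y:ℂ)*(x:ℂ), ((x:ℂ))^2,
        ((y:ℂ))^2+((x:ℂ))^2, ((Real.sqrt 2:ℝ):ℂ)*(y:ℂ)*(x:ℂ), ((y:ℂ))^2] := by
  have hs2 : Real.sqrt 2 ≠ 0 := by positivity
  refine ⟨Real.log (y+x) + Real.log (y-x),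
          (Real.log (y+x) - Real.log (y-x))/Real.sqrt 2, ?_⟩
  rw [gibbs_eq]
  have e1 : (Real.log (y+x) + Real.log (y-x) +
      Real.sqrt 2 * ((Real.log (y+x) - Real.log (y-x))/Real.sqrt 2))/2 = Real.log (y+x) := by
    field_simp
    ring
  have e2 : (Real.log (y+x) + Real.log (y-x) -
      Real.sqrt 2 * ((Real.log (y+x) - Real.log (y-x))/Real.sqrt 2))/2 = Real.log (y-x) := by
    field_simp
    ring
  rw [e1, e2, Real.exp_log h1, Real.exp_log h2']
  rw [show (y + x + (y - x))/2 = y by ring, show (y + x - (y - x))/2 = x by ring]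

lemma Z1 {c d : ℝ} (hcd : c < d) (q : Polynomial ℂ)
    (h : ∀ x : ℝ, x ∈ Set.Ioo c d → q.eval (x:ℂ) = 0) : q = 0 := by
  apply Polynomial.eq_zero_of_infinite_isRoot
  apply Set.Infinite.mono (s := (fun x : ℝ => (x:ℂ)) '' Set.Ioo c d)
  · rintro _ ⟨x, hx, rfl⟩; exact h x hx
  · exact (Set.Ioo_infinite hcd).image (fun a _ b _ hab => by exact_mod_cast hab)

lemma Z1mv {c d : ℝ} (hcd : c < d) (q : MvPolynomial (Fin 1) ℂ)
    (h : ∀ x : ℝ, x ∈ Set.Ioo c d → eval ![(x:ℂ)] q = 0) : q = 0 := by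
  have key : ∀ x : ℝ, x ∈ Set.Ioo c d →
      Polynomial.eval (x:ℂ) (Polynomial.map (eval (fun _ : Fin 0 => 0))
        (finSuccEquiv ℂ 0 q)) = 0 := by
    intro x hx
    rw [← eval_eq_eval_mv_eval' (fun _ : Fin 0 => 0) (x:ℂ) q]
    have : (Fin.cons (x:ℂ) (fun _ : Fin 0 => 0) : Fin 1 → ℂ) = ![(x:ℂ)] := by
      funext i; fin_cases i; rfl
    rw [this]; exact h x hx
  have h0 : Polynomial.map (eval (fun _ : Fin 0 => 0)) (finSuccEquiv ℂ 0 q) = 0 :=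
    Z1 hcd _ key
  have hinj : Function.Injective (eval (fun _ : Fin 0 => (0:ℂ)) :
      MvPolynomial (Fin 0) ℂ →+* ℂ) := by
    intro a b hab
    obtain ⟨a', rfl⟩ := C_surjective (Fin 0) a
    obtain ⟨b', rfl⟩ := C_surjective (Fin 0) b
    simpa using hab
  have h0' : Polynomial.map (eval (fun _ : Fin 0 => (0:ℂ))) (finSuccEquiv ℂ 0 q)
      = Polynomial.map (eval (fun _ : Fin 0 => (0:ℂ))) 0 := by simpa using h0
  have := Polynomial.map_injective _ hinj h0'
  exact (map_eq_zero_iff _ (AlgEquiv.injective _)).mp this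

lemma Z2 (q : MvPolynomial (Fin 2) ℂ)
    (h : ∀ u v : ℝ, u ∈ Set.Ioo (0:ℝ) 1 → v ∈ Set.Ioo (1:ℝ) 2 →
      eval ![(u:ℂ), (v:ℂ)] q = 0) : q = 0 := by
  have key : ∀ n : ℕ, (finSuccEquiv ℂ 1 q).coeff n = 0 := by
    intro n
    apply Z1mv (show (1:ℝ) < 2 by norm_num)
    intro v hv
    have hmap : Polynomial.map (eval ![(v:ℂ)]) (finSuccEquiv ℂ 1 q) = 0 := by
      apply Z1 (show (0:ℝ) < 1 by norm_num)
      intro u hu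
      rw [← eval_eq_eval_mv_eval' ![(v:ℂ)] (u:ℂ) q]
      have : (Fin.cons (u:ℂ) ![(v:ℂ)] : Fin 2 → ℂ) = ![(u:ℂ), (v:ℂ)] := by
        funext i; fin_cases i <;> rfl
      rw [this]; exact h u v hu hv
    have := congrArg (fun p => Polynomial.coeff p n) hmap
    simpa [Polynomial.coeff_map] using this
  have : finSuccEquiv ℂ 1 q = 0 := Polynomial.ext (by simpa using key)
  exact (map_eq_zero_iff _ (AlgEquiv.injective _)).mp this

lemma eval_aeval' {n m : ℕ} (pt : Fin m → ℂ) (g : Fin n → MvPolynomial (Fin m) ℂ)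
    (r : MvPolynomial (Fin n) ℂ) :
    eval pt (aeval g r) = eval (fun i => eval pt (g i)) r := by
  induction r using MvPolynomial.induction_on with
  | C a => simp
  | add p q hp hq => simp only [map_add, hp, hq]
  | mul_X p i hp => simp only [_root_.map_mul, aeval_X, eval_X, hp]

lemma aeval_aeval' {n m k : ℕ} (g : Fin m → MvPolynomial (Fin k) ℂ)
    (f : Fin n → MvPolynomial (Fin m) ℂ) (r : MvPolynomial (Fin n) ℂ) :
    aeval g (aeval f r) = aeval (fun i => aeval g (f i)) r := by
  induction r using MvPolynomial.induction_on with
  | C a => simp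
  | add p q hp hq => simp only [map_add, hp, hq]
  | mul_X p i hp => simp only [_root_.map_mul, aeval_X, hp]

noncomputable def vXs : Fin 2 → MvPolynomial (Fin 6) ℂ :=
  ![MvPolynomial.X 2, MvPolynomial.X 5]

noncomputable def g1 : MvPolynomial (Fin 6) ℂ := X 3 - X 2 - X 5
noncomputable def g2 : MvPolynomial (Fin 6) ℂ := X 1 - X 4
noncomputable def g3 : MvPolynomial (Fin 6) ℂ := X 0 - X 5
noncomputable def g4 : MvPolynomial (Fin 6) ℂ := -(2 * (X 2 * X 5)) + X 4 ^ 2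

noncomputable def Jp : Ideal (MvPolynomial (Fin 6) ℂ) := Ideal.span {g1, g2, g3, g4}

lemma hg1 : g1 ∈ Jp := Ideal.subset_span (by simp)
lemma hg2 : g2 ∈ Jp := Ideal.subset_span (by simp)
lemma hg3 : g3 ∈ Jp := Ideal.subset_span (by simp)
lemma hg4 : g4 ∈ Jp := Ideal.subset_span (by simp)

lemma red (p : MvPolynomial (Fin 6) ℂ) :
    ∃ r0 r1 : MvPolynomial (Fin 2) ℂ,
      p - (aeval vXs r0 + X 4 * aeval vXs r1) ∈ Jp := by
  induction p using MvPolynomial.induction_on with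
  | C a =>
    refine ⟨C a, 0, ?_⟩
    simp [vXs]
  | add p q hp hq =>
    obtain ⟨r0, r1, h⟩ := hp
    obtain ⟨s0, s1, h'⟩ := hq
    refine ⟨r0 + s0, r1 + s1, ?_⟩
    have e : p + q - (aeval vXs (r0 + s0) + X 4 * aeval vXs (r1 + s1)) =
        (p - (aeval vXs r0 + X 4 * aeval vXs r1)) +
        (q - (aeval vXs s0 + X 4 * aeval vXs s1)) := by
      simp only [map_add]; ring
    rw [e]; exact add_mem h h'
  | mul_X p i hp =>
    obtain ⟨r0, r1, h⟩ := hp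
    set R : MvPolynomial (Fin 6) ℂ := aeval vXs r0 + X 4 * aeval vXs r1 with hR
    have hv0 : aeval vXs (MvPolynomial.X 0 : MvPolynomial (Fin 2) ℂ) = X 2 := by
      simp [vXs]
    have hv1 : aeval vXs (MvPolynomial.X 1 : MvPolynomial (Fin 2) ℂ) = X 5 := by
      simp [vXs]
    fin_cases i
    · refine ⟨r0 * MvPolynomial.X 1, r1 * MvPolynomial.X 1, ?_⟩
      show p * X 0 - (aeval vXs (r0 * MvPolynomial.X 1) +
          X 4 * aeval vXs (r1 * MvPolynomial.X 1)) ∈ Jp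
      have e : p * X 0 - (aeval vXs (r0 * MvPolynomial.X 1) +
          X 4 * aeval vXs (r1 * MvPolynomial.X 1)) =
          (p - R) * X 0 + R * g3 := by
        simp only [_root_.map_mul, hv1, hR, g3]; ring
      rw [e]; exact add_mem (Ideal.mul_mem_right _ _ h) (Ideal.mul_mem_left _ _ hg3)
    · refine ⟨2 * (MvPolynomial.X 0 * MvPolynomial.X 1) * r1, r0, ?_⟩
      show p * X 1 - (aeval vXs (2 * (MvPolynomial.X 0 * MvPolynomial.X 1) * r1) +
          X 4 * aeval vXs r0) ∈ Jp
      have e : p * X 1 - (aeval vXs (2 * (MvPolynomial.X 0 * MvPolynomial.X 1) * r1) +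
          X 4 * aeval vXs r0) =
          (p - R) * X 1 + R * g2 + (aeval vXs r1) * g4 := by
        simp only [_root_.map_mul, hv0, hv1, map_ofNat, hR, g2, g4]; ring
      rw [e]
      exact add_mem (add_mem (Ideal.mul_mem_right _ _ h) (Ideal.mul_mem_left _ _ hg2))
        (Ideal.mul_mem_left _ _ hg4)
    · refine ⟨r0 * MvPolynomial.X 0, r1 * MvPolynomial.X 0, ?_⟩
      show p * X 2 - (aeval vXs (r0 * MvPolynomial.X 0) +
          X 4 * aeval vXs (r1 * MvPolynomial.X 0)) ∈ Jp
      have e : p * X 2 - (aeval vXs (r0 * MvPolynomial.X 0) +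
          X 4 * aeval vXs (r1 * MvPolynomial.X 0)) = (p - R) * X 2 := by
        simp only [_root_.map_mul, hv0, hR]; ring
      rw [e]; exact Ideal.mul_mem_right _ _ h
    · refine ⟨r0 * (MvPolynomial.X 0 + MvPolynomial.X 1),
              r1 * (MvPolynomial.X 0 + MvPolynomial.X 1), ?_⟩
      show p * X 3 - (aeval vXs (r0 * (MvPolynomial.X 0 + MvPolynomial.X 1)) +
          X 4 * aeval vXs (r1 * (MvPolynomial.X 0 + MvPolynomial.X 1))) ∈ Jp
      have e : p * X 3 - (aeval vXs (r0 * (MvPolynomial.X 0 + MvPolynomial.X 1)) +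
          X 4 * aeval vXs (r1 * (MvPolynomial.X 0 + MvPolynomial.X 1))) =
          (p - R) * X 3 + R * g1 := by
        simp only [_root_.map_mul, map_add, hv0, hv1, hR, g1]; ring
      rw [e]; exact add_mem (Ideal.mul_mem_right _ _ h) (Ideal.mul_mem_left _ _ hg1)
    · refine ⟨2 * (MvPolynomial.X 0 * MvPolynomial.X 1) * r1, r0, ?_⟩
      show p * X 4 - (aeval vXs (2 * (MvPolynomial.X 0 * MvPolynomial.X 1) * r1) +
          X 4 * aeval vXs r0) ∈ Jp
      have e : p * X 4 - (aeval vXs (2 * (MvPolynomial.X 0 * MvPolynomial.X 1) * r1) +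
          X 4 * aeval vXs r0) =
          (p - R) * X 4 + (aeval vXs r1) * g4 := by
        simp only [_root_.map_mul, hv0, hv1, map_ofNat, hR, g4]; ring
      rw [e]
      exact add_mem (Ideal.mul_mem_right _ _ h) (Ideal.mul_mem_left _ _ hg4)
    · refine ⟨r0 * MvPolynomial.X 1, r1 * MvPolynomial.X 1, ?_⟩
      show p * X 5 - (aeval vXs (r0 * MvPolynomial.X 1) +
          X 4 * aeval vXs (r1 * MvPolynomial.X 1)) ∈ Jp
      have e : p * X 5 - (aeval vXs (r0 * MvPolynomial.X 1) +
          X 4 * aeval vXs (r1 * MvPolynomial.X 1)) = (p - R) * X 5 := by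
        simp only [_root_.map_mul, hv1, hR]; ring
      rw [e]; exact Ideal.mul_mem_right _ _ h


lemma vec6_at5 {α : Type*} (a b c d e f : α) : ![a,b,c,d,e,f] 5 = f := rfl
lemma vec6_at4 {α : Type*} (a b c d e f : α) : ![a,b,c,d,e,f] 4 = e := rfl
lemma vec6_at3 {α : Type*} (a b c d e f : α) : ![a,b,c,d,e,f] 3 = d := rfl
lemma vec6_at2 {α : Type*} (a b c d e f : α) : ![a,b,c,d,e,f] 2 = c := rfl
lemma vec6_at1 {α : Type*} (a b c d e f : α) : ![a,b,c,d,e,f] 1 = b := rfl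
lemma vec6_at0 {α : Type*} (a b c d e f : α) : ![a,b,c,d,e,f] 0 = a := rfl

lemma gibbs_eq' (y₁ y₂ : ℝ) : ∃ s t : ℝ,
    gibbsPoint3 !![y₁, y₂, 0; y₂, y₁, y₂; 0, y₂, y₁] =
      ![((s:ℂ))^2, ((Real.sqrt 2:ℝ):ℂ)*(s:ℂ)*(t:ℂ), ((t:ℂ))^2,
         ((s:ℂ))^2+((t:ℂ))^2, ((Real.sqrt 2:ℝ):ℂ)*(s:ℂ)*(t:ℂ), ((s:ℂ))^2] :=
  ⟨_, _, by rw [gibbs_eq]⟩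

lemma mem_vi {L : Set (Matrix (Fin 3) (Fin 3) ℝ)} {q : MvPolynomial (Fin 6) ℂ} :
    q ∈ vanishingIdeal3 L ↔ ∀ A ∈ L, eval (gibbsPoint3 A) q = 0 := Iff.rfl

def Lset : Set (Matrix (Fin 3) (Fin 3) ℝ) :=
  {A | ∃ y₁ y₂ : ℝ, A = !![y₁, y₂, 0; y₂, y₁, y₂; 0, y₂, y₁]}

lemma span_le_vanishing : Jp ≤ vanishingIdeal3 Lset := by
  rw [Jp, Ideal.span_le]
  rintro g hg
  simp only [Set.mem_insert_iff, Set.mem_singleton_iff] at hg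
  rw [SetLike.mem_coe, mem_vi]
  rintro A ⟨y₁, y₂, rfl⟩
  obtain ⟨s, t, hpt⟩ := gibbs_eq' y₁ y₂
  rw [hpt]
  rcases hg with rfl | rfl | rfl | rfl <;>
    simp [g1, g2, g3, g4, vec6_at0, vec6_at1, vec6_at2, vec6_at3, vec6_at4, vec6_at5] <;>
    linear_combination ((s:ℂ)*(t:ℂ))^2 * h2C

lemma evkey (r : MvPolynomial (Fin 2) ℂ) (pt : Fin 6 → ℂ) :
    eval pt (aeval vXs r) = eval ![pt 2, pt 5] r := by
  rw [eval_aeval']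
  have : (fun i => eval pt (vXs i)) = ![pt 2, pt 5] := by
    funext i; fin_cases i <;> simp [vXs]
  rw [this]

lemma hval_aux (r0 r1 : MvPolynomial (Fin 2) ℂ) (c : ℂ) (hc : c ≠ 0)
    (x y : ℂ) (hx : x ≠ 0) (hy : y ≠ 0) (u v : ℂ)
    (h₁ : eval ![u, v] r0 + c * y * x * eval ![u, v] r1 = 0)
    (h₂ : eval ![u, v] r0 + c * y * (-x) * eval ![u, v] r1 = 0) :
    eval ![u, v] r0 = 0 ∧ eval ![u, v] r1 = 0 := by
  have e0 : eval ![u, v] r0 = 0 := by linear_combination h₁/2 + h₂/2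
  have e3 : c * y * x * (eval ![u, v] r1 * 2) = 0 := by linear_combination h₁ - h₂
  have := (mul_eq_zero.mp e3).resolve_left
    (by exact mul_ne_zero (mul_ne_zero hc hy) hx)
  constructor
  · exact e0
  · have h2' := (mul_eq_zero.mp this).resolve_right (by norm_num)
    exact h2'

lemma sqrt2C_ne : ((Real.sqrt 2:ℝ):ℂ) ≠ 0 := by
  simpa using (by positivity : Real.sqrt 2 ≠ 0)

lemma vanishing_le_span : vanishingIdeal3 Lset ≤ Jp := by
  intro p hp
  obtain ⟨r0, r1, hmem⟩ := red p
  have hsub : p - (aeval vXs r0 + X 4 * aeval vXs r1) ∈ vanishingIdeal3 Lset :=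
    span_le_vanishing hmem
  have hRv : ∀ A ∈ Lset, eval (gibbsPoint3 A) (aeval vXs r0 + X 4 * aeval vXs r1) = 0 := by
    intro A hA
    have h1 := (mem_vi.mp hp) A hA
    have h2 := (mem_vi.mp hsub) A hA
    rw [map_sub] at h2
    linear_combination h1 - h2
  have hPt : ∀ x y : ℝ, 0 < y + x → 0 < y - x →
      eval ![((x:ℂ))^2, ((y:ℂ))^2] r0
        + ((Real.sqrt 2:ℝ):ℂ) * (y:ℂ) * (x:ℂ) * eval ![((x:ℂ))^2, ((y:ℂ))^2] r1 = 0 := by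
    intro x y hxy1 hxy2
    obtain ⟨y₁, y₂, hpt⟩ := param x y hxy1 hxy2
    have hv := hRv _ ⟨y₁, y₂, rfl⟩
    rw [hpt, map_add, _root_.map_mul, evkey r0, evkey r1, eval_X] at hv
    simpa [vec6_at2, vec6_at4, vec6_at5] using hv
  have hval : ∀ u v : ℝ, u ∈ Set.Ioo (0:ℝ) 1 → v ∈ Set.Ioo (1:ℝ) 2 →
      eval ![(u:ℂ), (v:ℂ)] r0 = 0 ∧ eval ![(u:ℂ), (v:ℂ)] r1 = 0 := by
    intro u v hu hv
    set x := Real.sqrt u with hxdef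
    set y := Real.sqrt v with hydef
    have hx : 0 < x := Real.sqrt_pos.mpr hu.1
    have hxlt : x < 1 := by
      rw [hxdef, show (1:ℝ) = Real.sqrt 1 by rw [Real.sqrt_one]]
      exact Real.sqrt_lt_sqrt hu.1.le hu.2
    have hy1 : 1 < y := by
      rw [hydef, show (1:ℝ) = Real.sqrt 1 by rw [Real.sqrt_one]]
      exact Real.sqrt_lt_sqrt (by norm_num) hv.1
    have h₁ := hPt x y (by linarith) (by linarith)
    have h₂ := hPt (-x) y (by rw [show y + -x = y - x by ring]; linarith)
      (by rw [show y - -x = y + x by ring]; linarith)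
    push_cast at h₂
    rw [show ((-(x:ℂ)))^2 = (x:ℂ)^2 by ring] at h₂
    have hx2 : ((x:ℂ))^2 = (u:ℂ) := by
      rw [← Complex.ofReal_pow, Real.sq_sqrt hu.1.le]
    have hy2 : ((y:ℂ))^2 = (v:ℂ) := by
      rw [← Complex.ofReal_pow, Real.sq_sqrt (by linarith [hv.1] : (0:ℝ) ≤ v)]
    rw [hx2, hy2] at h₁ h₂
    exact hval_aux r0 r1 _ sqrt2C_ne _ _
      (by exact_mod_cast hx.ne') (by exact_mod_cast (by linarith : (0:ℝ) < y).ne') _ _ h₁ h₂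
  have hr0 : r0 = 0 := Z2 r0 (fun u v hu hv => (hval u v hu hv).1)
  have hr1 : r1 = 0 := Z2 r1 (fun u v hu hv => (hval u v hu hv).2)
  rw [hr0, hr1] at hmem
  simpa using hmem

lemma main_eq : vanishingIdeal3 Lset = Jp :=
  le_antisymm vanishing_le_span span_le_vanishing

noncomputable def w6 : Fin 6 → MvPolynomial (Fin 2) ℂ :=
  ![2*MvPolynomial.X 1^2, 2*(MvPolynomial.X 0*MvPolynomial.X 1), MvPolynomial.X 0^2,
    MvPolynomial.X 0^2 + 2*MvPolynomial.X 1^2, 2*(MvPolynomial.X 0*MvPolynomial.X 1),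
    2*MvPolynomial.X 1^2]

noncomputable def Psi : MvPolynomial (Fin 6) ℂ →+* MvPolynomial (Fin 2) ℂ :=
  (aeval w6 : MvPolynomial (Fin 6) ℂ →ₐ[ℂ] MvPolynomial (Fin 2) ℂ).toRingHom

lemma Psi_apply (p : MvPolynomial (Fin 6) ℂ) : Psi p = aeval w6 p := rfl

lemma span_le_ker : Jp ≤ RingHom.ker Psi := by
  rw [Jp, Ideal.span_le]
  rintro g hg
  simp only [Set.mem_insert_iff, Set.mem_singleton_iff] at hg
  rw [SetLike.mem_coe, RingHom.mem_ker]
  rcases hg with rfl | rfl | rfl | rfl <;>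
    simp only [Psi_apply, g1, g2, g3, g4, map_sub, map_add, map_neg, _root_.map_mul,
      map_pow, map_ofNat, aeval_X, w6, vec6_at0, vec6_at1, vec6_at2, vec6_at3,
      vec6_at4, vec6_at5] <;> ring

lemma ker_le_span : RingHom.ker Psi ≤ Jp := by
  intro p hp
  rw [RingHom.mem_ker, Psi_apply] at hp
  obtain ⟨r0, r1, hmem⟩ := red p
  have h0 : aeval w6 (p - (aeval vXs r0 + X 4 * aeval vXs r1)) = 0 := by
    have := span_le_ker hmem
    rwa [RingHom.mem_ker, Psi_apply] at this
  have hR0 : aeval w6 (aeval vXs r0 + X 4 * aeval vXs r1) = 0 := by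
    rw [map_sub] at h0
    linear_combination hp - h0
  have hc : ∀ r : MvPolynomial (Fin 2) ℂ, aeval w6 (aeval vXs r) =
      aeval ![MvPolynomial.X 0^2, 2*MvPolynomial.X 1^2] r := by
    intro r
    rw [aeval_aeval']
    have : (fun i => aeval w6 (vXs i)) =
        ![(MvPolynomial.X 0^2 : MvPolynomial (Fin 2) ℂ), 2*MvPolynomial.X 1^2] := by
      funext i; fin_cases i <;> simp [vXs, w6, vec6_at2, vec6_at5]
    rw [this]
  have hPt : ∀ x y : ℝ,
      eval ![((x:ℂ))^2, 2*((y:ℂ))^2] r0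
        + 2 * (y:ℂ) * (x:ℂ) * eval ![((x:ℂ))^2, 2*((y:ℂ))^2] r1 = 0 := by
    intro x y
    have hpt : (fun i => eval ![(x:ℂ), (y:ℂ)]
        ((![(MvPolynomial.X 0^2 : MvPolynomial (Fin 2) ℂ), 2*MvPolynomial.X 1^2]) i)) =
        ![((x:ℂ))^2, 2*((y:ℂ))^2] := by
      funext i; fin_cases i <;> simp
    have hv := congrArg (eval ![(x:ℂ), (y:ℂ)]) hR0
    rw [map_add, _root_.map_mul, hc r0, hc r1] at hv
    rw [map_add, _root_.map_mul] at hv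
    rw [eval_aeval', eval_aeval' (g := ![(MvPolynomial.X 0^2 : MvPolynomial (Fin 2) ℂ),
      2*MvPolynomial.X 1^2]) (r := r1), hpt] at hv
    have hx4 : eval ![(x:ℂ), (y:ℂ)] (aeval w6 (X 4 : MvPolynomial (Fin 6) ℂ)) =
        2 * ((x:ℂ) * (y:ℂ)) := by
      simp only [aeval_X, w6, vec6_at4, _root_.map_mul, map_ofNat, eval_X,
        Matrix.cons_val_zero, Matrix.cons_val_one, Matrix.head_cons]
    rw [hx4] at hv
    simp only [map_zero] at hv
    linear_combination hv
  have hval : ∀ u v : ℝ, u ∈ Set.Ioo (0:ℝ) 1 → v ∈ Set.Ioo (1:ℝ) 2 →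
      eval ![(u:ℂ), (v:ℂ)] r0 = 0 ∧ eval ![(u:ℂ), (v:ℂ)] r1 = 0 := by
    intro u v hu hv
    set x := Real.sqrt u with hxdef
    set y := Real.sqrt (v/2) with hydef
    have hx : 0 < x := Real.sqrt_pos.mpr hu.1
    have hy : 0 < y := Real.sqrt_pos.mpr (by linarith [hv.1])
    have h₁ := hPt x y
    have h₂ := hPt (-x) y
    push_cast at h₂
    rw [show ((-(x:ℂ)))^2 = (x:ℂ)^2 by ring] at h₂
    have hx2 : ((x:ℂ))^2 = (u:ℂ) := by
      rw [← Complex.ofReal_pow, Real.sq_sqrt hu.1.le]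
    have hy2 : 2 * ((y:ℂ))^2 = (v:ℂ) := by
      rw [← Complex.ofReal_pow, Real.sq_sqrt (by linarith [hv.1] : (0:ℝ) ≤ v/2)]
      push_cast; ring
    rw [hx2, hy2] at h₁ h₂
    exact hval_aux r0 r1 2 (by norm_num) _ _
      (by exact_mod_cast hx.ne') (by exact_mod_cast hy.ne') _ _ h₁ h₂
  have hr0 : r0 = 0 := Z2 r0 (fun u v hu hv => (hval u v hu hv).1)
  have hr1 : r1 = 0 := Z2 r1 (fun u v hu hv => (hval u v hu hv).2)
  rw [hr0, hr1] at hmem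
  simpa using hmem

lemma ker_eq : Jp = RingHom.ker Psi := le_antisymm span_le_ker ker_le_span

lemma main_prime : Jp.IsPrime := by
  rw [ker_eq]
  exact RingHom.ker_isPrime Psi

end AuxPath8

/-- Coloured path graph with all vertices of the same colour and both edges
of the same colour: the vanishing ideal is the prime ideal generated by three linear forms
and a quadric. -/
theorem gibbs_ideal_coloured_path_8 :
    vanishingIdeal3 {A | ∃ y₁ y₂ : ℝ, A = !![y₁, y₂, 0; y₂, y₁, y₂; 0, y₂, y₁]} =
      Ideal.span {x22 - x13 - x33, x12 - x23, x11 - x33,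
        -(2 * (x13 * x33)) + x23 ^ 2} ∧
    (Ideal.span {x22 - x13 - x33, x12 - x23, x11 - x33,
        -(2 * (x13 * x33)) + x23 ^ 2} : Ideal (MvPolynomial (Fin 6) ℂ)).IsPrime := by
  constructor
  · exact AuxPath8.main_eq
  · exact AuxPath8.main_prime
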